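/- Fix real constants m > 0, k ≠ 0, M > 0, set Ñ₁ = 1, Ñ₂ = M, Ñ₃ = 1, and let i, μ be natural numbers. On the open set {I₁,I₂,I₃ > 0} ⊂ ℝ⁶ with coordinates (I₁,I₂,I₃,φ¹,φ²,φ³), define the vector fields X_i = (mk²/I₃^{i+3}) ∂/∂φ³ and Γ_{iμ} = (1/(3+i)) Σ_{j=1}^3 (Ñ_j^μ / I_j^{μ−1}) (∂/∂I_j + ∂/∂φ^j). Then Γ_{iμ} is a master symmetry of degree 1 for X_i: the Lie brackets of vector fields satisfy [X_i, Γ_{iμ}] = X_{i+μ}, where X_{i+μ} = (mk²/I₃^{μ+i+3}) ∂/∂φ³, and [X_i, X_{i+μ}] = 0. -/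

import Mathlib

open scoped BigOperators

/-- Phase space with Delaunay-type coordinates `z.1 = (I₁,I₂,I₃)` and
angles `z.2 = (φ¹,φ²,φ³)`. -/
abbrev PhaseSpace := (Fin 3 → ℝ) × (Fin 3 → ℝ)

/-- Lie bracket of vector fields:
`[X,Y](z) = (DY)(z)·X(z) − (DX)(z)·Y(z)`. -/
noncomputable def lieB (X Y : PhaseSpace → PhaseSpace) (z : PhaseSpace) : PhaseSpace :=
  fderiv ℝ Y z (X z) - fderiv ℝ X z (Y z)

/-- The constants `Ñ₁ = 1, Ñ₂ = M, Ñ₃ = 1`. -/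
noncomputable def Ntil (M : ℝ) : Fin 3 → ℝ := ![1, M, 1]

/-- The dynamical symmetries `X_n = (mk²/I₃^{n+3}) ∂/∂φ³`. -/
noncomputable def Xvf (m k : ℝ) (n : ℕ) (z : PhaseSpace) : PhaseSpace :=
  (0, Pi.single 2 (m * k ^ 2 / (z.1 2) ^ (n + 3)))

/-- The master symmetries
`Γ_{iμ} = (1/(3+i)) Σ_j (Ñ_j^μ / I_j^{μ−1}) (∂/∂I_j + ∂/∂φ^j)`. -/
noncomputable def Gam (M : ℝ) (i μ : ℕ) (z : PhaseSpace) : PhaseSpace :=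
  ((fun j => (1 / (3 + (i : ℝ))) * ((Ntil M j) ^ μ / (z.1 j) ^ ((μ : ℝ) - 1))),
   (fun j => (1 / (3 + (i : ℝ))) * ((Ntil M j) ^ μ / (z.1 j) ^ ((μ : ℝ) - 1))))

-- fderiv of a function depending only on the first component, applied to a
-- vector with vanishing first component, is zero.
lemma fderiv_fst_dep (g : (Fin 3 → ℝ) → PhaseSpace) (z : PhaseSpace)
    (w : Fin 3 → ℝ) (hg : DifferentiableAt ℝ g z.1) :
    fderiv ℝ (fun z : PhaseSpace => g z.1) z ((0 : Fin 3 → ℝ), w) = 0 := by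
  have h : fderiv ℝ (g ∘ Prod.fst) z =
      (fderiv ℝ g z.1).comp (fderiv ℝ (Prod.fst : PhaseSpace → Fin 3 → ℝ) z) :=
    fderiv_comp z hg differentiableAt_fst
  have : (fun z : PhaseSpace => g z.1) = g ∘ Prod.fst := rfl
  rw [this, h]
  simp [fderiv_fst]

-- the derivative structure of Xvf
lemma hasFDerivAt_Xvf (m k : ℝ) (n : ℕ) (z : PhaseSpace) (ht : z.1 2 ≠ 0) :
    HasFDerivAt (Xvf m k n)
      ((0 : PhaseSpace →L[ℝ] (Fin 3 → ℝ)).prod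
        ((ContinuousLinearMap.pi (Pi.single 2 (ContinuousLinearMap.id ℝ ℝ))).comp
          ((m * k ^ 2 * (-(↑(n + 3) * z.1 2 ^ (n + 2)) / (z.1 2 ^ (n + 3)) ^ 2)) •
            ((ContinuousLinearMap.proj 2).comp
              (ContinuousLinearMap.fst ℝ (Fin 3 → ℝ) (Fin 3 → ℝ)))))) z := by
  set t := z.1 2 with htdef
  have hpow : HasDerivAt (fun s : ℝ => m * k ^ 2 * (s ^ (n + 3))⁻¹)
      (m * k ^ 2 * (-(↑(n + 3) * t ^ (n + 2)) / (t ^ (n + 3)) ^ 2)) t := by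
    have h1 := (hasDerivAt_pow (n + 3) t).inv (pow_ne_zero _ ht)
    have h2 := h1.const_mul (m * k ^ 2)
    simpa using h2
  have hp : HasFDerivAt (fun z : PhaseSpace => z.1 2)
      ((ContinuousLinearMap.proj 2).comp
        (ContinuousLinearMap.fst ℝ (Fin 3 → ℝ) (Fin 3 → ℝ))) z :=
    ((ContinuousLinearMap.proj 2).comp
        (ContinuousLinearMap.fst ℝ (Fin 3 → ℝ) (Fin 3 → ℝ))).hasFDerivAt
  have hs := hpow.comp_hasFDerivAt z hp
  have hsingle := (hasFDerivAt_single (𝕜 := ℝ) (E := fun _ : Fin 3 => ℝ) (i := 2)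
      (m * k ^ 2 * (t ^ (n + 3))⁻¹)).comp z hs
  have hpair := (hasFDerivAt_const (0 : Fin 3 → ℝ) z).prodMk hsingle
  have heq : Xvf m k n = fun z : PhaseSpace =>
      ((0 : Fin 3 → ℝ), Pi.single 2 (m * k ^ 2 * ((z.1 2) ^ (n + 3))⁻¹)) := by
    funext z
    simp [Xvf, div_eq_mul_inv]
  rw [heq]
  exact hpair


/-- `Γ_{iμ}` is a master symmetry of degree 1 for `X_i`:
`[X_i, Γ_{iμ}] = X_{i+μ}` and `[X_i, X_{i+μ}] = 0` on `{I₁,I₂,I₃ > 0}`. -/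
theorem stmt15 (m k M : ℝ) (hm : 0 < m) (hk : k ≠ 0) (hM : 0 < M) (i μ : ℕ) :
    ∀ z : PhaseSpace, (∀ j : Fin 3, 0 < z.1 j) →
      lieB (Xvf m k i) (Gam M i μ) z = Xvf m k (i + μ) z ∧
      lieB (Xvf m k i) (Xvf m k (i + μ)) z = 0 := by
  intro z hz
  have ht : z.1 2 ≠ 0 := (hz 2).ne'
  have htpos : 0 < z.1 2 := hz 2
  -- differentiability of the fst-component dependence of Xvf
  have hXg : ∀ n : ℕ, DifferentiableAt ℝ
      (fun q : Fin 3 → ℝ => (((0 : Fin 3 → ℝ),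
        Pi.single (2 : Fin 3) (m * k ^ 2 / (q 2) ^ (n + 3))) : PhaseSpace)) z.1 := by
    intro n
    have hb : DifferentiableAt ℝ (fun q : Fin 3 → ℝ => q 2 ^ (n + 3)) z.1 :=
      (differentiableAt_apply (𝕜 := ℝ) 2 z.1).pow _
    have h1 : DifferentiableAt ℝ (fun q : Fin 3 → ℝ => m * k ^ 2 / (q 2) ^ (n + 3)) z.1 := by
      simp only [div_eq_mul_inv]
      exact (hb.inv (pow_ne_zero _ ht)).const_mul _
    exact (differentiableAt_const _).prodMk
      (((hasFDerivAt_single (𝕜 := ℝ) (E := fun _ : Fin 3 => ℝ) (i := 2)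
        (m * k ^ 2 / (z.1 2) ^ (n + 3))).differentiableAt).comp z.1 h1)
  have hXfst : ∀ n : ℕ, ∀ w : Fin 3 → ℝ,
      fderiv ℝ (Xvf m k n) z ((0 : Fin 3 → ℝ), w) = 0 := by
    intro n w
    exact fderiv_fst_dep _ z w (hXg n)
  -- the Gam field also depends only on z.1
  have hGg : DifferentiableAt ℝ
      (fun q : Fin 3 → ℝ =>
        (((fun j => (1 / (3 + (i : ℝ))) * ((Ntil M j) ^ μ / (q j) ^ ((μ : ℝ) - 1))),
          (fun j => (1 / (3 + (i : ℝ))) * ((Ntil M j) ^ μ / (q j) ^ ((μ : ℝ) - 1)))) :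
          PhaseSpace)) z.1 := by
    have h1 : DifferentiableAt ℝ
        (fun q : Fin 3 → ℝ =>
          (fun j => (1 / (3 + (i : ℝ))) * ((Ntil M j) ^ μ / (q j) ^ ((μ : ℝ) - 1)))) z.1 := by
      rw [differentiableAt_pi]
      intro j
      apply DifferentiableAt.const_mul
      have hb : DifferentiableAt ℝ (fun q : Fin 3 → ℝ => (q j) ^ ((μ : ℝ) - 1)) z.1 :=
        (differentiableAt_apply (𝕜 := ℝ) j z.1).rpow_const (Or.inl (hz j).ne')
      simp only [div_eq_mul_inv]
      exact (hb.inv (Real.rpow_pos_of_pos (hz j) _).ne').const_mul _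
    exact h1.prodMk h1
  have hGam0 : fderiv ℝ (Gam M i μ) z (Xvf m k i z) = 0 := by
    have : Xvf m k i z = ((0 : Fin 3 → ℝ), Pi.single 2 (m * k ^ 2 / (z.1 2) ^ (i + 3))) := rfl
    rw [this]
    exact fderiv_fst_dep _ z _ hGg
  have hXder := (hasFDerivAt_Xvf m k i z ht).fderiv
  constructor
  · rw [lieB, hGam0, hXder]
    apply Prod.ext
    · simp [Xvf]
    · simp only [Xvf]
      funext j
      simp only [ContinuousLinearMap.prod_apply, ContinuousLinearMap.comp_apply,
        ContinuousLinearMap.smul_apply, ContinuousLinearMap.proj_apply,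
        ContinuousLinearMap.coe_fst', ContinuousLinearMap.pi_apply, Prod.snd_sub,
        Pi.sub_apply, Prod.snd_zero, Pi.zero_apply]
      simp only [Pi.single_apply]
      by_cases hj : j = 2
      · subst hj
        simp only [if_pos rfl]
        have hG2 : (Gam M i μ z).1 2 =
            (1 / (3 + (i : ℝ))) * (1 / (z.1 2) ^ ((μ : ℝ) - 1)) := by
          simp [Gam, Ntil]
        rw [hG2]
        have hrp : (z.1 2) ^ ((μ : ℝ) - 1) = (z.1 2) ^ μ / z.1 2 := by
          rw [Real.rpow_sub htpos, Real.rpow_natCast, Real.rpow_one]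
        rw [hrp]
        have h3i : (3 : ℝ) + (i : ℝ) ≠ 0 := by positivity
        field_simp
        simp only [if_true, ContinuousLinearMap.id_apply]
        push_cast
        rw [smul_eq_mul]
        field_simp
        ring
      · simp [hj]
  · rw [lieB]
    have h1 : fderiv ℝ (Xvf m k (i + μ)) z (Xvf m k i z) = 0 := by
      have : Xvf m k i z = ((0 : Fin 3 → ℝ), Pi.single 2 (m * k ^ 2 / (z.1 2) ^ (i + 3))) := rfl
      rw [this]; exact hXfst (i + μ) _
    have h2 : fderiv ℝ (Xvf m k i) z (Xvf m k (i + μ) z) = 0 := by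
      have : Xvf m k (i + μ) z =
          ((0 : Fin 3 → ℝ), Pi.single 2 (m * k ^ 2 / (z.1 2) ^ (i + μ + 3))) := rfl
      rw [this]; exact hXfst i _
    rw [h1, h2, sub_zero]
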